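/- The composition (substitution) map ∘ : F((t)) × M → F((t)), (f, s) ↦ f ∘ s, where M = tF[[t]], is continuous with respect to the t-adic topology. -/

import Mathlib

/-- Composition (substitution) of power series: `pscomp f s = f ∘ s = Σ_i a_i s^i`. -/
noncomputable def pscomp {F : Type*} [Field F] (f s : PowerSeries F) : PowerSeries F :=
  PowerSeries.mk fun n =>
    ∑ i ∈ Finset.range (n + 1), PowerSeries.coeff i f * PowerSeries.coeff n (s ^ i)

/-- the composition map `∘ : F[[t]] × M → F[[t]]` is continuous for the
`t`-adic topology: given `(f, s)` and `N`, there is `M` such that whenever `(g, r)` agrees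
with `(f, s)` up to coefficient `M` (and `r ∈ M`), `g ∘ r` agrees with `f ∘ s` up to
coefficient `N`. -/
theorem statement11 (F : Type*) [Field F] (f s : PowerSeries F)
    (hs : PowerSeries.constantCoeff s = 0) (N : ℕ) :
    ∃ M : ℕ, ∀ g r : PowerSeries F, PowerSeries.constantCoeff r = 0 →
      (∀ i : ℕ, i ≤ M → PowerSeries.coeff i (g - f) = 0) →
      (∀ i : ℕ, i ≤ M → PowerSeries.coeff i (r - s) = 0) →
      ∀ i : ℕ, i ≤ N → PowerSeries.coeff i (pscomp g r - pscomp f s) = 0 := by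
  refine ⟨N, fun g r _ hg hr n hn => ?_⟩
  have hrs : (PowerSeries.X : PowerSeries F) ^ (N + 1) ∣ r - s := by
    rw [PowerSeries.X_pow_dvd_iff]
    exact fun m hm => hr m (Nat.lt_succ_iff.mp hm)
  have hcoef : ∀ i : ℕ, PowerSeries.coeff n (r ^ i) = PowerSeries.coeff n (s ^ i) := by
    intro i
    have hd : (PowerSeries.X : PowerSeries F) ^ (N + 1) ∣ r ^ i - s ^ i :=
      hrs.trans (sub_dvd_pow_sub_pow r s i)
    have := (PowerSeries.X_pow_dvd_iff.mp hd) n (Nat.lt_succ_of_le hn)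
    rw [map_sub] at this
    exact sub_eq_zero.mp this
  have hgf : ∀ i : ℕ, i ≤ n → PowerSeries.coeff i g = PowerSeries.coeff i f := by
    intro i hi
    have := hg i (hi.trans hn)
    rw [map_sub, sub_eq_zero] at this
    exact this
  rw [map_sub, sub_eq_zero]
  simp only [pscomp, PowerSeries.coeff_mk]
  refine Finset.sum_congr rfl fun i hi => ?_
  rw [hgf i (Nat.lt_succ_iff.mp (Finset.mem_range.mp hi)), hcoef i]
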